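/- A surjective homomorphism from an abelian group generated by at most m elements onto the free abelian group Z^m is an isomorphism. -/

import Mathlib

/-- A surjective homomorphism from an abelian group generated by at most `m` elements
onto the free abelian group `ℤ^m` is injective (hence an isomorphism). -/
theorem stmt_11 {A : Type*} [AddCommGroup A] (m : ℕ)
    (hgen : ∃ s : Finset A, s.card ≤ m ∧ AddSubgroup.closure (s : Set A) = ⊤)
    (f : A →+ (Fin m → ℤ)) (hf : Function.Surjective f) :
    Function.Injective f := by
  obtain ⟨s, hcard, hclosure⟩ := hgen
  -- the span of s as a ℤ-submodule is everything
  have hspan : Submodule.span ℤ (s : Set A) = ⊤ := by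
    rw [Submodule.eq_top_iff']
    intro x
    have hx : x ∈ (Submodule.span ℤ (s : Set A)).toAddSubgroup := by
      rw [Submodule.span_int_eq_addSubgroupClosure, hclosure]
      trivial
    exact hx
  -- choose an embedding of s into Fin m
  obtain ⟨e⟩ : Nonempty (s ↪ Fin m) :=
    Function.Embedding.nonempty_of_card_le (by simpa using hcard)
  -- v : Fin m → A hitting all of s
  set v : Fin m → A := Function.extend e (fun x : s => (x : A)) 0 with hv
  have hsub : (s : Set A) ⊆ Set.range v := by
    intro x hx
    exact ⟨e ⟨x, hx⟩, by simp [hv, e.injective.extend_apply]⟩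
  have hvspan : Submodule.span ℤ (Set.range v) = ⊤ :=
    top_unique (hspan ▸ Submodule.span_mono hsub)
  -- the linear combination map π : (Fin m → ℤ) → A is surjective
  set π : (Fin m → ℤ) →ₗ[ℤ] A := Fintype.linearCombination ℤ v with hπ
  have hπsurj : Function.Surjective π := by
    rw [← LinearMap.range_eq_top, hπ, Fintype.range_linearCombination, hvspan]
  -- The endomorphism f ∘ π of ℤ^m is surjective, hence injective
  set F : (Fin m → ℤ) →ₗ[ℤ] (Fin m → ℤ) := f.toIntLinearMap.comp π with hF
  have hFsurj : Function.Surjective F := hf.comp hπsurj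
  have hFinj : Function.Injective F :=
    OrzechProperty.injective_of_surjective_endomorphism F hFsurj
  -- conclude
  intro a b hab
  obtain ⟨x, rfl⟩ := hπsurj a
  obtain ⟨y, rfl⟩ := hπsurj b
  have : F x = F y := hab
  rw [hFinj this]
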